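/- Let L ∈ ℕ and let λ > L be a real number. Let z ∈ ℝ^{L+1} have entries z_i = i/λ − 1 for i = 0, …, L and let 1 ∈ ℝ^{L+1} be the all-ones vector. Then every eigenvalue of the real symmetric (L+1)×(L+1) matrix B = 1·zᵀ + z·1ᵀ is at most L(L+1)/(2λ). -/

import Mathlib

open Matrix Finset

theorem stmt_6 (L : ℕ) (x : ℝ) (hx : (L : ℝ) < x) :
    ∀ μ : ℝ,
      Module.End.HasEigenvalue
        (Matrix.toLin'
          (Matrix.vecMulVec (fun _ : Fin (L + 1) => (1 : ℝ))
              (fun i : Fin (L + 1) => ((i : ℕ) : ℝ) / x - 1) +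
            Matrix.vecMulVec (fun i : Fin (L + 1) => ((i : ℕ) : ℝ) / x - 1)
              (fun _ : Fin (L + 1) => (1 : ℝ)))) μ →
      μ ≤ (L : ℝ) * ((L : ℝ) + 1) / (2 * x) := by
  intro μ hμ
  obtain ⟨v, hv⟩ := hμ.exists_hasEigenvector
  have hx0 : (0:ℝ) < x := lt_of_le_of_lt (Nat.cast_nonneg L) hx
  set z : Fin (L+1) → ℝ := fun i => ((i:ℕ):ℝ)/x - 1 with hzdef
  set a : ℝ := ∑ j, v j with ha
  set b : ℝ := ∑ j, z j * v j with hb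
  set T : ℝ := ∑ j : Fin (L+1), ((j:ℕ):ℝ) * v j with hT
  set S : ℝ := ∑ j, (v j)^2 with hS
  have hBv : ∀ i, b + z i * a = μ * v i := by
    intro i
    have h := congrFun (hv.apply_eq_smul) i
    simp only [Matrix.toLin'_apply, Matrix.mulVec, dotProduct,
      Matrix.add_apply, Matrix.vecMulVec_apply, Pi.smul_apply, smul_eq_mul] at h
    rw [← h, hb, ha, Finset.mul_sum, ← Finset.sum_add_distrib]
    exact Finset.sum_congr rfl fun j _ => by ring
  -- S positive
  have hS0 : 0 < S := by
    rw [hS]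
    obtain ⟨i, hi⟩ := Function.ne_iff.mp hv.2
    exact Finset.sum_pos' (fun j _ => sq_nonneg _)
      ⟨i, Finset.mem_univ i, by simpa [sq_abs] using pow_pos (abs_pos.mpr hi) 2⟩
  -- x * b = T - x * a
  have hxb : x * b = T - x * a := by
    rw [hb, hT, ha, Finset.mul_sum, Finset.mul_sum, ← Finset.sum_sub_distrib]
    refine Finset.sum_congr rfl fun j _ => ?_
    simp only [hzdef]
    field_simp
  -- μ * S = 2 * a * b
  have hmuS : μ * S = 2 * a * b := by
    have : μ * S = ∑ j, (μ * v j) * v j := by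
      rw [hS, Finset.mul_sum]; exact Finset.sum_congr rfl fun j _ => by ring
    rw [this]
    have : ∀ j : Fin (L+1), (μ * v j) * v j = b * v j + a * (z j * v j) := by
      intro j; rw [← hBv j]; ring
    simp_rw [this]
    rw [Finset.sum_add_distrib, ← Finset.mul_sum, ← Finset.mul_sum, ← ha, ← hb]
    ring
  -- Cauchy-Schwarz
  have hCS : T^2 ≤ (∑ j : Fin (L+1), ((j:ℕ):ℝ)^2) * S := by
    rw [hT, hS]
    exact Finset.sum_mul_sq_le_sq_mul_sq _ _ _
  -- bound on sum of squares
  have hQ : (∑ j : Fin (L+1), ((j:ℕ):ℝ)^2) ≤ ((L:ℝ)+1) * ((L:ℝ) * x) := by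
    calc (∑ j : Fin (L+1), ((j:ℕ):ℝ)^2) ≤ ∑ _j : Fin (L+1), (L:ℝ) * x := by
          refine Finset.sum_le_sum fun j _ => ?_
          have h1 : ((j:ℕ):ℝ) ≤ (L:ℝ) := by
            exact_mod_cast Nat.lt_succ_iff.mp j.isLt
          have h2 : (0:ℝ) ≤ ((j:ℕ):ℝ) := Nat.cast_nonneg _
          nlinarith
      _ = ((L:ℝ)+1) * ((L:ℝ) * x) := by
          rw [Finset.sum_const, Finset.card_univ, Fintype.card_fin, nsmul_eq_mul]
          push_cast; ring
  -- main polynomial inequality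
  have hmain : (μ * (2*x)) * S * x ≤ ((L:ℝ) * ((L:ℝ)+1)) * S * x := by
    have e : (μ * (2*x)) * S * x = 4 * a * x * (T - x * a) := by
      have : (μ * (2*x)) * S * x = 2 * x * (μ * S) * x := by ring
      rw [this, hmuS]
      have : 2 * x * (2 * a * b) * x = 4 * a * x * (x * b) := by ring
      rw [this, hxb]
    rw [e]
    nlinarith [sq_nonneg (2*a*x - T), hCS, hQ, hS0.le, hx0, mul_nonneg hS0.le hx0.le]
  have hmain2 : μ * (2*x) ≤ (L:ℝ) * ((L:ℝ)+1) := by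
    have h1 := le_of_mul_le_mul_right hmain hx0
    exact le_of_mul_le_mul_right h1 hS0
  rw [le_div_iff₀ (by positivity)]
  exact hmain2
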